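/- A subset S ⊆ ℕ is the exponent semigroup of a 2×2 rational matrix if and only if S is a Lucas semigroup. That is, there exists a 2×2 matrix A over ℚ with S(A) = S if and only if there exist P, Q ∈ ℤ and R ∈ ℚ with L(P,Q,R) = S. -/

import Mathlib

/-- The Lucas sequence `U_n(P,Q)`: `U_0 = 0`, `U_1 = 1`,
`U_{n+2} = P·U_{n+1} − Q·U_n`. -/
def lucasU (P Q : ℤ) : ℕ → ℤ
  | 0 => 0
  | 1 => 1
  | n + 2 => P * lucasU P Q (n + 1) - Q * lucasU P Q n

/-- The Lucas semigroup `L(P,Q,R) = {n ∈ ℕ : U_n(P,Q)·R ∈ ℤ}`. -/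
def lucasSG (P Q : ℤ) (R : ℚ) : Set ℕ :=
  {n : ℕ | ∃ k : ℤ, (lucasU P Q n : ℚ) * R = (k : ℚ)}

/-- The exponent semigroup `S(A) = {n ∈ ℕ : A^n has all integer entries}`. -/
def expSG {d : ℕ} (A : Matrix (Fin d) (Fin d) ℚ) : Set ℕ :=
  {n : ℕ | ∀ i j, ∃ k : ℤ, (A ^ n) i j = (k : ℚ)}

lemma lucasU_zero (P Q : ℤ) : lucasU P Q 0 = 0 := rfl
lemma lucasU_one (P Q : ℤ) : lucasU P Q 1 = 1 := rfl
lemma lucasU_add_two (P Q : ℤ) (n : ℕ) :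
    lucasU P Q (n + 2) = P * lucasU P Q (n + 1) - Q * lucasU P Q n := rfl

/-- integrality criterion -/
lemma int_mul_iff (q : ℚ) (m : ℤ) :
    (∃ k : ℤ, (m : ℚ) * q = (k : ℚ)) ↔ ((q.den : ℤ) ∣ m) := by
  constructor
  · rintro ⟨k, hk⟩
    have hden : ((q.den : ℚ)) ≠ 0 := by
      exact_mod_cast q.den_nz
    have h2 : (m : ℚ) * (q.num : ℚ) = (k : ℚ) * (q.den : ℚ) := by
      rw [← Rat.num_div_den q] at hk
      field_simp at hk
      linear_combination hk
    have h3 : m * q.num = k * q.den := by exact_mod_cast h2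
    have h4 : (q.den : ℤ) ∣ m * q.num := Dvd.intro k (by linarith)
    have h5 : q.den ∣ m.natAbs * q.num.natAbs := by
      rw [← Int.natAbs_mul]
      exact Int.natCast_dvd.mp h4
    have h6 : q.den ∣ m.natAbs :=
      (Nat.Coprime.dvd_of_dvd_mul_right (Nat.Coprime.symm q.reduced) h5)
    exact Int.natCast_dvd.mpr h6
  · rintro ⟨c, hc⟩
    refine ⟨c * q.num, ?_⟩
    have hden : ((q.den : ℚ)) ≠ 0 := by exact_mod_cast q.den_nz
    conv_lhs => rw [← Rat.num_div_den q]
    rw [hc]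
    push_cast
    field_simp

/-- Cayley–Hamilton for 2×2 matrices. -/
lemma ch2 (A : Matrix (Fin 2) (Fin 2) ℚ) :
    A ^ 2 = (A 0 0 + A 1 1) • A - (A 0 0 * A 1 1 - A 0 1 * A 1 0) • (1 : Matrix (Fin 2) (Fin 2) ℚ) := by
  ext i j
  fin_cases i <;> fin_cases j <;>
    simp [pow_two, Matrix.mul_apply, Fin.sum_univ_two, Matrix.one_apply,
      Matrix.sub_apply, Matrix.smul_apply] <;> ring

/-- Power formula from a quadratic relation. -/
lemma pow_formula (A : Matrix (Fin 2) (Fin 2) ℚ) (P Q : ℤ)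
    (h : A ^ 2 = (P : ℚ) • A - (Q : ℚ) • 1) (n : ℕ) :
    A ^ (n + 1) = ((lucasU P Q (n + 1) : ℤ) : ℚ) • A
      - ((Q * lucasU P Q n : ℤ) : ℚ) • (1 : Matrix (Fin 2) (Fin 2) ℚ) := by
  induction n with
  | zero => simp [lucasU_one, lucasU_zero]
  | succ n ih =>
    have : A ^ (n + 2) = A ^ (n + 1) * A := by rw [pow_succ]
    rw [this, ih, Matrix.sub_mul, Matrix.smul_mul, Matrix.smul_mul, Matrix.one_mul,
      show A * A = A ^ 2 from (pow_two A).symm, h]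
    ext i j
    fin_cases i <;> fin_cases j <;>
      simp [Matrix.sub_apply, Matrix.smul_apply, Matrix.one_apply, lucasU_add_two] <;>
      push_cast <;> ring

lemma inv_nat_int_iff (m : ℕ) (hm : m ≠ 0) (x : ℤ) :
    (∃ k : ℤ, (x : ℚ) * ((m : ℚ))⁻¹ = (k : ℚ)) ↔ ((m : ℤ) ∣ x) := by
  have hm' : ((m : ℚ)) ≠ 0 := by exact_mod_cast hm
  constructor
  · rintro ⟨k, hk⟩
    have : (x : ℚ) = (k : ℚ) * (m : ℚ) := by field_simp at hk; linear_combination hk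
    have hx : x = k * (m : ℤ) := by exact_mod_cast this
    exact Dvd.intro_left k hx.symm
  · rintro ⟨c, rfl⟩
    exact ⟨c, by push_cast; field_simp⟩

/-- Backward direction: every Lucas semigroup is an exponent semigroup. -/
lemma lucas_to_exp (P Q : ℤ) (R : ℚ) :
    ∃ A : Matrix (Fin 2) (Fin 2) ℚ, expSG A = lucasSG P Q R := by
  set b : ℕ := R.den with hb
  have hb0 : (b : ℚ) ≠ 0 := by
    exact_mod_cast R.den_nz
  refine ⟨!![0, (b : ℚ)⁻¹; -(Q : ℚ) * b, (P : ℚ)], ?_⟩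
  set A : Matrix (Fin 2) (Fin 2) ℚ := !![0, (b : ℚ)⁻¹; -(Q : ℚ) * b, (P : ℚ)] with hA
  have hsq : A ^ 2 = (P : ℚ) • A - (Q : ℚ) • 1 := by
    ext i j
    fin_cases i <;> fin_cases j <;>
      simp [hA, pow_two, Matrix.mul_apply, Fin.sum_univ_two, Matrix.one_apply,
        Matrix.sub_apply, Matrix.smul_apply] <;> field_simp <;> ring
  ext n
  match n with
  | 0 =>
    simp only [expSG, lucasSG, Set.mem_setOf_eq, pow_zero, lucasU_zero]
    constructor
    · intro _; exact ⟨0, by push_cast; ring⟩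
    · intro _ i j
      by_cases hij : i = j
      · exact ⟨1, by simp [Matrix.one_apply, hij]⟩
      · exact ⟨0, by simp [Matrix.one_apply, hij]⟩
  | n + 1 =>
    simp only [expSG, lucasSG, Set.mem_setOf_eq]
    rw [pow_formula A P Q hsq n]
    rw [show (∃ k : ℤ, (lucasU P Q (n+1) : ℚ) * R = (k : ℚ)) ↔ ((R.den : ℤ) ∣ lucasU P Q (n+1)) from int_mul_iff R _]
    constructor
    · intro h
      have h01 := h 0 1
      simp [hA, Matrix.sub_apply, Matrix.smul_apply, Matrix.one_apply] at h01
      exact (inv_nat_int_iff b (R.den_nz) _).mp h01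
    · intro hdvd i j
      obtain ⟨k, hk⟩ := (inv_nat_int_iff b (R.den_nz) _).mpr hdvd
      fin_cases i <;> fin_cases j <;>
        simp [hA, Matrix.sub_apply, Matrix.smul_apply, Matrix.one_apply]
      · exact ⟨-(Q * lucasU P Q n), by push_cast; ring⟩
      · exact ⟨k, by rw [← hk]⟩
      · exact ⟨-(Q * b * lucasU P Q (n+1)), by push_cast; ring⟩
      · exact ⟨P * lucasU P Q (n+1) - Q * lucasU P Q n, by push_cast; ring⟩

lemma lucasU_two_zero (n : ℕ) : lucasU 2 0 (n + 1) = 2 ^ n := by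
  induction n using Nat.twoStepInduction with
  | zero => rfl
  | one => rfl
  | more n ih1 ih2 => rw [lucasU_add_two, ih1, ih2]; ring

lemma lucasSG_zero : lucasSG 2 0 ((3 : ℚ))⁻¹ = {0} := by
  ext n
  match n with
  | 0 =>
    simp only [lucasSG, Set.mem_setOf_eq, lucasU_zero]
    exact ⟨fun _ => rfl, fun _ => ⟨0, by norm_num⟩⟩
  | n + 1 =>
    simp only [lucasSG, Set.mem_setOf_eq, lucasU_two_zero]
    constructor
    · rintro ⟨k, hk⟩
      exfalso
      have h3 : ((2 : ℤ) ^ n : ℤ) = 3 * k := by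
        have : ((2 : ℤ) ^ n : ℚ) = 3 * (k : ℚ) := by
          push_cast at hk ⊢
          field_simp at hk
          linear_combination hk
        exact_mod_cast this
      have h3' : (3 : ℤ) ∣ (2 : ℤ) ^ n := ⟨k, h3⟩
      have := (Int.Prime.dvd_pow' (p := 3) (by norm_num) h3')
      norm_num at this
    · intro h; exact absurd h (Nat.succ_ne_zero n)

lemma pow_den_one (q : ℚ) (m : ℕ) (hm : m ≠ 0) (h : ∃ k : ℤ, (q ^ m : ℚ) = (k : ℚ)) :
    q.den = 1 := by
  obtain ⟨k, hk⟩ := h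
  have : (q ^ m).den = 1 := by rw [hk]; exact Rat.den_intCast k
  rw [Rat.den_pow] at this
  exact ((pow_eq_one_iff).mp this).resolve_right hm

lemma zero_mem_exp (A : Matrix (Fin 2) (Fin 2) ℚ) : 0 ∈ expSG A := by
  intro i j
  rw [pow_zero]
  by_cases hij : i = j
  · exact ⟨1, by simp [Matrix.one_apply, hij]⟩
  · exact ⟨0, by simp [Matrix.one_apply, hij]⟩

/-- membership characterization when the char poly has integer coefficients -/
lemma exp_mem_iff (A : Matrix (Fin 2) (Fin 2) ℚ) (P Q : ℤ)
    (hsq : A ^ 2 = (P : ℚ) • A - (Q : ℚ) • 1) (n : ℕ) :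
    ((n + 1) ∈ expSG A) ↔ (∀ i j, ((A i j).den : ℤ) ∣ lucasU P Q (n + 1)) := by
  constructor
  · intro h i j
    have hij := h i j
    rw [pow_formula A P Q hsq n] at hij
    simp only [Matrix.sub_apply, Matrix.smul_apply, Matrix.one_apply, smul_eq_mul] at hij
    apply (int_mul_iff (A i j) _).mp
    obtain ⟨k, hk⟩ := hij
    by_cases hij' : i = j
    · subst hij'
      rw [if_pos rfl] at hk
      refine ⟨k + Q * lucasU P Q n, ?_⟩
      push_cast at hk ⊢
      linear_combination hk
    · rw [if_neg hij'] at hk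
      refine ⟨k, ?_⟩
      push_cast
      linear_combination hk
  · intro h i j
    rw [pow_formula A P Q hsq n]
    obtain ⟨k, hk⟩ := (int_mul_iff (A i j) _).mpr (h i j)
    simp only [Matrix.sub_apply, Matrix.smul_apply, Matrix.one_apply, smul_eq_mul]
    by_cases hij' : i = j
    · subst hij'
      rw [if_pos rfl]
      refine ⟨k - Q * lucasU P Q n, ?_⟩
      push_cast at hk ⊢
      linear_combination hk
    · rw [if_neg hij']
      refine ⟨k, ?_⟩
      push_cast
      linear_combination hk

def lucasV (a c : ℤ) : ℕ → ℤ
  | 0 => 2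
  | 1 => a
  | n + 2 => a * lucasV a c (n + 1) - c * lucasV a c n

lemma lucasV_add_two (a c : ℤ) (n : ℕ) :
    lucasV a c (n + 2) = a * lucasV a c (n + 1) - c * lucasV a c n := rfl

lemma trace_not_int (A : Matrix (Fin 2) (Fin 2) ℚ)
    (ht : (A 0 0 + A 1 1).den ≠ 1)
    (hd : (A 0 0 * A 1 1 - A 0 1 * A 1 0).den = 1) (n : ℕ) :
    (n + 1) ∉ expSG A := by
  set t : ℚ := A 0 0 + A 1 1 with htt
  set d : ℚ := A 0 0 * A 1 1 - A 0 1 * A 1 0 with hdd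
  set a : ℤ := t.num with ha
  set b : ℕ := t.den with hbb
  set c : ℤ := d.num * (b : ℤ) ^ 2 with hc
  have hb0 : ((b : ℚ)) ≠ 0 := by exact_mod_cast t.den_nz
  have hdq : ((d.num : ℚ)) = d := (Rat.den_eq_one_iff d).mp hd
  have hpow : ∀ m, A ^ (m + 2) = t • A ^ (m + 1) - d • A ^ m := by
    intro m
    have h1 : A ^ (m + 2) = A ^ m * A ^ 2 := by rw [← pow_add]
    rw [h1, ch2 A, Matrix.mul_sub, Matrix.mul_smul, Matrix.mul_smul, Matrix.mul_one,
      ← pow_succ, ← htt, ← hdd]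
  have hV : ∀ m, ((A ^ m) 0 0 + (A ^ m) 1 1) * (b : ℚ) ^ m = (lucasV a c m : ℚ) := by
    intro m
    induction m using Nat.twoStepInduction with
    | zero => simp [lucasV, Matrix.one_apply]; norm_num
    | one =>
      rw [pow_one, ← htt]
      show t * _ = _
      rw [show t = ((t.num : ℚ)) / ((t.den : ℚ)) from (Rat.num_div_den t).symm]
      field_simp
      rw [show lucasV a c 1 = a from rfl, hbb, ha]; ring
    | more m ih ih1 =>
      have hrec : (A ^ (m + 2)) 0 0 + (A ^ (m + 2)) 1 1
          = t * ((A ^ (m + 1)) 0 0 + (A ^ (m + 1)) 1 1) - d * ((A ^ m) 0 0 + (A ^ m) 1 1) := by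
        rw [hpow m]
        simp only [Matrix.sub_apply, Matrix.smul_apply, smul_eq_mul]
        ring
      have htb : t * (b : ℚ) = (a : ℚ) := by
        rw [show t = ((t.num : ℚ)) / ((t.den : ℚ)) from (Rat.num_div_den t).symm]
        field_simp
        rw [hbb, ha]; ring
      calc ((A ^ (m + 2)) 0 0 + (A ^ (m + 2)) 1 1) * (b : ℚ) ^ (m + 2)
          = (t * (b : ℚ)) * (((A ^ (m + 1)) 0 0 + (A ^ (m + 1)) 1 1) * (b : ℚ) ^ (m + 1))
            - ((d.num : ℚ) * (b : ℚ) ^ 2) * (((A ^ m) 0 0 + (A ^ m) 1 1) * (b : ℚ) ^ m) := by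
            rw [hrec, hdq]; ring
        _ = (lucasV a c (m + 2) : ℚ) := by
            rw [ih1, ih, htb, lucasV_add_two]; push_cast [hc]; ring
  have hbc : (b : ℤ) ∣ c := ⟨d.num * b, by rw [hc]; ring⟩
  have hmod : ∀ m, (b : ℤ) ∣ lucasV a c (m + 1) - a ^ (m + 1) := by
    intro m
    induction m with
    | zero => simp [lucasV]
    | succ m ih =>
      have heq : lucasV a c (m + 2) - a ^ (m + 2)
          = a * (lucasV a c (m + 1) - a ^ (m + 1)) - c * lucasV a c m := by
        rw [lucasV_add_two]; ring
      rw [heq]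
      exact dvd_sub (ih.mul_left a) (hbc.mul_right _)
  intro hmem
  obtain ⟨k0, hk0⟩ := hmem 0 0
  obtain ⟨k1, hk1⟩ := hmem 1 1
  have hVn : (lucasV a c (n + 1) : ℚ) = ((k0 + k1 : ℤ) : ℚ) * ((b : ℤ) : ℚ) ^ (n + 1) := by
    rw [← hV (n + 1), hk0, hk1]; push_cast; ring
  have hVi : lucasV a c (n + 1) = (k0 + k1) * (b : ℤ) ^ (n + 1) := by exact_mod_cast hVn
  have hbV : (b : ℤ) ∣ lucasV a c (n + 1) :=
    ⟨(k0 + k1) * (b : ℤ) ^ n, by rw [hVi]; ring⟩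
  have hba : (b : ℤ) ∣ a ^ (n + 1) := by
    have h2 := dvd_sub hbV (hmod n)
    simpa using h2
  have hnat : b ∣ a.natAbs ^ (n + 1) := by
    have h3 := Int.natCast_dvd.mp hba
    rwa [Int.natAbs_pow] at h3
  have hcop : Nat.Coprime (a.natAbs ^ (n + 1)) b := Nat.Coprime.pow_left _ t.reduced
  exact ht (Nat.Coprime.eq_one_of_dvd hcop.symm hnat)

lemma det_not_int (A : Matrix (Fin 2) (Fin 2) ℚ)
    (hd : (A 0 0 * A 1 1 - A 0 1 * A 1 0).den ≠ 1) (n : ℕ) :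
    (n + 1) ∉ expSG A := by
  intro h
  obtain ⟨k00, hk00⟩ := h 0 0
  obtain ⟨k01, hk01⟩ := h 0 1
  obtain ⟨k10, hk10⟩ := h 1 0
  obtain ⟨k11, hk11⟩ := h 1 1
  have hdet : (A 0 0 * A 1 1 - A 0 1 * A 1 0) ^ (n + 1)
      = ((k00 * k11 - k01 * k10 : ℤ) : ℚ) := by
    rw [← Matrix.det_fin_two A, ← Matrix.det_pow, Matrix.det_fin_two,
      hk00, hk01, hk10, hk11]
    push_cast
    ring
  exact hd (pow_den_one _ (n + 1) (Nat.succ_ne_zero n) ⟨_, hdet⟩)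

lemma exp_to_lucas (A : Matrix (Fin 2) (Fin 2) ℚ) :
    ∃ (P Q : ℤ) (R : ℚ), lucasSG P Q R = expSG A := by
  by_cases hd : (A 0 0 * A 1 1 - A 0 1 * A 1 0).den = 1
  · by_cases ht : (A 0 0 + A 1 1).den = 1
    · -- integer trace and determinant
      have hP : (((A 0 0 + A 1 1).num : ℚ)) = A 0 0 + A 1 1 :=
        (Rat.den_eq_one_iff _).mp ht
      have hQ : (((A 0 0 * A 1 1 - A 0 1 * A 1 0).num : ℚ)) = A 0 0 * A 1 1 - A 0 1 * A 1 0 :=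
        (Rat.den_eq_one_iff _).mp hd
      set P : ℤ := (A 0 0 + A 1 1).num with hPP
      set Q : ℤ := (A 0 0 * A 1 1 - A 0 1 * A 1 0).num with hQQ
      have hsq : A ^ 2 = (P : ℚ) • A - (Q : ℚ) • 1 := by
        rw [hP, hQ]; exact ch2 A
      set M : ℕ := Nat.lcm (Nat.lcm (A 0 0).den (A 0 1).den)
        (Nat.lcm (A 1 0).den (A 1 1).den) with hM
      have hM0 : M ≠ 0 :=
        Nat.lcm_ne_zero (Nat.lcm_ne_zero (A 0 0).den_nz (A 0 1).den_nz)
          (Nat.lcm_ne_zero (A 1 0).den_nz (A 1 1).den_nz)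
      refine ⟨P, Q, ((M : ℚ))⁻¹, ?_⟩
      ext n
      match n with
      | 0 =>
        simp only [lucasSG, Set.mem_setOf_eq, lucasU_zero]
        exact ⟨fun _ => zero_mem_exp A, fun _ => ⟨0, by push_cast; ring⟩⟩
      | n + 1 =>
        simp only [lucasSG, Set.mem_setOf_eq]
        rw [inv_nat_int_iff M hM0 (lucasU P Q (n + 1)), exp_mem_iff A P Q hsq n]
        constructor
        · intro hdvd i j
          refine dvd_trans (Int.natCast_dvd_natCast.mpr ?_) hdvd
          fin_cases i <;> fin_cases j
          · exact dvd_trans (Nat.dvd_lcm_left _ _) (Nat.dvd_lcm_left _ _)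
          · exact dvd_trans (Nat.dvd_lcm_right _ _) (Nat.dvd_lcm_left _ _)
          · exact dvd_trans (Nat.dvd_lcm_left _ _) (Nat.dvd_lcm_right _ _)
          · exact dvd_trans (Nat.dvd_lcm_right _ _) (Nat.dvd_lcm_right _ _)
        · intro h
          apply Int.natCast_dvd.mpr
          exact Nat.lcm_dvd
            (Nat.lcm_dvd (Int.natCast_dvd.mp (h 0 0)) (Int.natCast_dvd.mp (h 0 1)))
            (Nat.lcm_dvd (Int.natCast_dvd.mp (h 1 0)) (Int.natCast_dvd.mp (h 1 1)))
    · -- non-integer trace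
      refine ⟨2, 0, ((3 : ℚ))⁻¹, ?_⟩
      rw [lucasSG_zero]
      ext n
      match n with
      | 0 => simp [zero_mem_exp A]
      | n + 1 =>
        simp only [Set.mem_singleton_iff]
        exact ⟨fun h => absurd h (Nat.succ_ne_zero n),
          fun h => absurd h (trace_not_int A ht hd n)⟩
  · -- non-integer determinant
    refine ⟨2, 0, ((3 : ℚ))⁻¹, ?_⟩
    rw [lucasSG_zero]
    ext n
    match n with
    | 0 => simp [zero_mem_exp A]
    | n + 1 =>
      simp only [Set.mem_singleton_iff]
      exact ⟨fun h => absurd h (Nat.succ_ne_zero n),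
        fun h => absurd h (det_not_int A hd n)⟩

theorem expSG_two_dim_iff_lucasSG (S : Set ℕ) :
    (∃ A : Matrix (Fin 2) (Fin 2) ℚ, expSG A = S) ↔
      ∃ (P Q : ℤ) (R : ℚ), lucasSG P Q R = S := by
  constructor
  · rintro ⟨A, rfl⟩
    exact exp_to_lucas A
  · rintro ⟨P, Q, R, rfl⟩
    exact lucas_to_exp P Q R
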